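/- Let Y ∈ ℝ^n, X ∈ ℝ^{n×p} with X′X invertible, Λ = (λ₁,…,λ_p) with λ₁ ≥ … ≥ λ_p ≥ 0 and λ₁ > 0, and let r(b,π) = ½‖Y − Xb‖₂² + π′b. Let π* be any minimizer over C_Λ of π ↦ (X′Y − π)′(X′X)^{-1}(X′Y − π) and β* = (X′X)^{-1}(X′Y − π*). Then (β*, π*) is a saddle point of r on M × C_Λ, where M = {b ∈ ℝ^p : ‖b‖₂² ≤ p‖Y‖₂⁴/(4λ₁²)}: r(β*, π) ≤ r(β*, π*) ≤ r(b, π*) for all b ∈ M and π ∈ C_Λ. -/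

import Mathlib

open Matrix

/-- The unit ball `C_Λ` of the dual SLOPE norm: for every `k`, the sum of the `k`
largest values among `|π j|` is at most the sum of the first `k` entries of `Λ`. -/
def dualBall {p : ℕ} (Λ : Fin p → ℝ) : Set (Fin p → ℝ) :=
  {π | ∀ S : Finset (Fin p),
    ∑ j ∈ S, |π j| ≤ ∑ j ∈ Finset.univ.filter (fun j : Fin p => (j : ℕ) < S.card), Λ j}

lemma dualBall_segment {p : ℕ} (Λ : Fin p → ℝ) {a b : Fin p → ℝ} (ha : a ∈ dualBall Λ)
    (hb : b ∈ dualBall Λ) {t : ℝ} (ht0 : 0 ≤ t) (ht1 : t ≤ 1) :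
    a + t • (b - a) ∈ dualBall Λ := by
  intro S
  have h1 : ∀ j ∈ S, |(a + t • (b - a)) j| ≤ (1 - t) * |a j| + t * |b j| := by
    intro j _
    have hj : (a + t • (b - a)) j = (1 - t) * a j + t * b j := by
      simp only [Pi.add_apply, Pi.smul_apply, Pi.sub_apply, smul_eq_mul]; ring
    rw [hj]
    calc |(1 - t) * a j + t * b j| ≤ |(1 - t) * a j| + |t * b j| := abs_add_le _ _
      _ = (1 - t) * |a j| + t * |b j| := by
          rw [abs_mul, abs_mul, abs_of_nonneg (by linarith), abs_of_nonneg ht0]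
  calc ∑ j ∈ S, |(a + t • (b - a)) j| ≤ ∑ j ∈ S, ((1 - t) * |a j| + t * |b j|) :=
        Finset.sum_le_sum h1
    _ = (1 - t) * ∑ j ∈ S, |a j| + t * ∑ j ∈ S, |b j| := by
        rw [Finset.sum_add_distrib, Finset.mul_sum, Finset.mul_sum]
    _ ≤ (1 - t) * (∑ j ∈ Finset.univ.filter (fun j : Fin p => (j : ℕ) < S.card), Λ j)
        + t * (∑ j ∈ Finset.univ.filter (fun j : Fin p => (j : ℕ) < S.card), Λ j) := by
        gcongr
        · exact ha S
        · exact hb S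
    _ = ∑ j ∈ Finset.univ.filter (fun j : Fin p => (j : ℕ) < S.card), Λ j := by ring


lemma quad_expand {p q : ℕ} (B : Matrix (Fin q) (Fin q) ℝ)
    (hB : ∀ v w : Fin q → ℝ, v ⬝ᵥ (B *ᵥ w) = w ⬝ᵥ (B *ᵥ v))
    (E d : Fin q → ℝ) (t : ℝ) (hp : p = p) :
    (E - t • d) ⬝ᵥ (B *ᵥ (E - t • d)) =
      E ⬝ᵥ (B *ᵥ E) - 2 * t * (d ⬝ᵥ (B *ᵥ E)) + t * t * (d ⬝ᵥ (B *ᵥ d)) := by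
  simp only [Matrix.mulVec_sub, Matrix.mulVec_smul, dotProduct_sub,
    sub_dotProduct, dotProduct_smul, smul_dotProduct, smul_eq_mul]
  rw [hB E d]
  ring

lemma dot_sub_expand {q : ℕ} (w v : Fin q → ℝ) :
    (w - v) ⬝ᵥ (w - v) = w ⬝ᵥ w - 2 * (w ⬝ᵥ v) + v ⬝ᵥ v := by
  simp only [dotProduct_sub, sub_dotProduct]
  rw [dotProduct_comm v w]
  ring

/-- If `π*` minimizes `π ↦ (X'Y - π)'(X'X)⁻¹(X'Y - π)` over `C_Λ` and
`β* = (X'X)⁻¹(X'Y - π*)`, then `(β*, π*)` is a saddle point of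
`r(b,π) = ½‖Y - Xb‖₂² + π'b` on `M × C_Λ`:
`r(β*, π) ≤ r(β*, π*) ≤ r(b, π*)` for all `b ∈ M`, `π ∈ C_Λ`. -/
theorem dual_minimizer_saddle_point {n p : ℕ} (hp : 0 < p)
    (X : Matrix (Fin n) (Fin p) ℝ) (Y : Fin n → ℝ) (hX : IsUnit (Xᵀ * X).det)
    (Λ : Fin p → ℝ) (hΛanti : Antitone Λ) (hΛnonneg : ∀ i, 0 ≤ Λ i)
    (hlam1 : 0 < Λ ⟨0, hp⟩)
    (M : Set (Fin p → ℝ))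
    (hM : M = {b | ∑ i, (b i) ^ 2 ≤ (p : ℝ) * (∑ i, (Y i) ^ 2) ^ 2 / (4 * (Λ ⟨0, hp⟩) ^ 2)})
    (r : (Fin p → ℝ) → (Fin p → ℝ) → ℝ)
    (hr : r = fun b π => (1 / 2) * ∑ i, (Y i - (X *ᵥ b) i) ^ 2 + ∑ i, π i * b i)
    (πstar : Fin p → ℝ) (hmem : πstar ∈ dualBall Λ)
    (hmin : ∀ π ∈ dualBall Λ,
      (Xᵀ *ᵥ Y - πstar) ⬝ᵥ ((Xᵀ * X)⁻¹ *ᵥ (Xᵀ *ᵥ Y - πstar)) ≤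
        (Xᵀ *ᵥ Y - π) ⬝ᵥ ((Xᵀ * X)⁻¹ *ᵥ (Xᵀ *ᵥ Y - π)))
    (βstar : Fin p → ℝ) (hβ : βstar = (Xᵀ * X)⁻¹ *ᵥ (Xᵀ *ᵥ Y - πstar)) :
    βstar ∈ M ∧
    (∀ π ∈ dualBall Λ, r βstar π ≤ r βstar πstar) ∧
    (∀ b ∈ M, r βstar πstar ≤ r b πstar) := by
  subst hM hr
  set Λ0 := Λ ⟨0, hp⟩ with hΛ0
  -- basic linear algebra facts
  have hXtw : ∀ (w : Fin n → ℝ) (u : Fin p → ℝ), w ⬝ᵥ (X *ᵥ u) = (Xᵀ *ᵥ w) ⬝ᵥ u := by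
    intro w u
    rw [Matrix.dotProduct_mulVec]
    congr 1
    conv_lhs => rw [← Matrix.transpose_transpose X, Matrix.vecMul_transpose]
  have hAinv_symm : ((Xᵀ * X)⁻¹)ᵀ = (Xᵀ * X)⁻¹ := by
    rw [Matrix.transpose_nonsing_inv, Matrix.transpose_mul, Matrix.transpose_transpose]
  have hswapinv : ∀ v w : Fin p → ℝ,
      v ⬝ᵥ ((Xᵀ * X)⁻¹ *ᵥ w) = w ⬝ᵥ ((Xᵀ * X)⁻¹ *ᵥ v) := by
    intro v w
    rw [Matrix.dotProduct_mulVec]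
    conv_lhs => rw [← hAinv_symm, Matrix.vecMul_transpose]
    exact dotProduct_comm _ _
  have hApsd : ∀ v : Fin p → ℝ, 0 ≤ v ⬝ᵥ ((Xᵀ * X) *ᵥ v) := by
    intro v
    calc (0:ℝ) ≤ (X *ᵥ v) ⬝ᵥ (X *ᵥ v) :=
          Finset.sum_nonneg fun i _ => mul_self_nonneg _
      _ = (Xᵀ *ᵥ (X *ᵥ v)) ⬝ᵥ v := hXtw (X *ᵥ v) v
      _ = v ⬝ᵥ ((Xᵀ * X) *ᵥ v) := by
          rw [Matrix.mulVec_mulVec, dotProduct_comm]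
  have hAAinv : ∀ d : Fin p → ℝ, (Xᵀ * X) *ᵥ ((Xᵀ * X)⁻¹ *ᵥ d) = d := by
    intro d
    rw [Matrix.mulVec_mulVec, Matrix.mul_nonsing_inv _ hX, Matrix.one_mulVec]
  have hApsdinv : ∀ d : Fin p → ℝ, 0 ≤ d ⬝ᵥ ((Xᵀ * X)⁻¹ *ᵥ d) := by
    intro d
    have h1 := hApsd ((Xᵀ * X)⁻¹ *ᵥ d)
    calc (0:ℝ) ≤ ((Xᵀ * X)⁻¹ *ᵥ d) ⬝ᵥ ((Xᵀ * X) *ᵥ ((Xᵀ * X)⁻¹ *ᵥ d)) := h1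
      _ = ((Xᵀ * X) *ᵥ ((Xᵀ * X)⁻¹ *ᵥ d)) ⬝ᵥ ((Xᵀ * X)⁻¹ *ᵥ d) := dotProduct_comm _ _
      _ = d ⬝ᵥ ((Xᵀ * X)⁻¹ *ᵥ d) := by rw [hAAinv]
  -- variational inequality
  have hVI : ∀ π ∈ dualBall Λ, π ⬝ᵥ βstar ≤ πstar ⬝ᵥ βstar := by
    intro π hπ
    set d : Fin p → ℝ := π - πstar with hd
    obtain ⟨s, hsdef⟩ : ∃ s : ℝ, s = d ⬝ᵥ βstar := ⟨_, rfl⟩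
    obtain ⟨c, hcdef⟩ : ∃ c : ℝ, c = d ⬝ᵥ ((Xᵀ * X)⁻¹ *ᵥ d) := ⟨_, rfl⟩
    have hcnn : 0 ≤ c := hcdef ▸ hApsdinv d
    have hkey : ∀ t : ℝ, 0 ≤ t → t ≤ 1 → 2 * t * s ≤ t * t * c := by
      intro t ht0 ht1
      rw [hsdef, hcdef]
      have hmem' : πstar + t • (π - πstar) ∈ dualBall Λ :=
        dualBall_segment Λ hmem hπ ht0 ht1
      have h2 := hmin _ hmem'
      have harr : Xᵀ *ᵥ Y - (πstar + t • (π - πstar)) = (Xᵀ *ᵥ Y - πstar) - t • d := by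
        rw [hd, sub_add_eq_sub_sub]
      rw [harr, quad_expand (p := p) ((Xᵀ * X)⁻¹) hswapinv (Xᵀ *ᵥ Y - πstar) d t rfl,
        ← hβ] at h2
      linarith
    by_contra hcon
    push_neg at hcon
    have hs : 0 < s := by
      rw [hsdef, hd, sub_dotProduct]
      linarith
    rcases eq_or_lt_of_le hcnn with hc0 | hc0
    · have := hkey 1 zero_le_one le_rfl
      rw [← hc0] at this
      linarith
    · set t := min 1 (s / c) with htdef
      have ht0 : 0 < t := lt_min one_pos (div_pos hs hc0)
      have ht1 : t ≤ 1 := min_le_left _ _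
      have htc : t * c ≤ s := by
        have h3 : t ≤ s / c := min_le_right _ _
        calc t * c ≤ (s / c) * c := by nlinarith
          _ = s := by field_simp
      have hk := hkey t ht0.le ht1
      nlinarith [mul_le_mul_of_nonneg_left htc ht0.le, mul_pos ht0 hs]
  -- exact quadratic expansion: βstar minimizes r (·, πstar) globally
  have hAβ : Xᵀ *ᵥ (X *ᵥ βstar) = Xᵀ *ᵥ Y - πstar := by
    rw [hβ, Matrix.mulVec_mulVec]
    exact hAAinv _
  have hres : Xᵀ *ᵥ (Y - X *ᵥ βstar) = πstar := by
    rw [Matrix.mulVec_sub, hAβ]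
    abel
  have hsum : ∀ (π b : Fin p → ℝ),
      (1 / 2 : ℝ) * ∑ i, (Y i - (X *ᵥ b) i) ^ 2 + ∑ i, π i * b i =
        (1 / 2) * ((Y - X *ᵥ b) ⬝ᵥ (Y - X *ᵥ b)) + π ⬝ᵥ b := by
    intro π b
    simp [dotProduct, sq]
  have hC3 : ∀ b : Fin p → ℝ,
      (1 / 2 : ℝ) * ((Y - X *ᵥ βstar) ⬝ᵥ (Y - X *ᵥ βstar)) + πstar ⬝ᵥ βstar ≤
        (1 / 2) * ((Y - X *ᵥ b) ⬝ᵥ (Y - X *ᵥ b)) + πstar ⬝ᵥ b := by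
    intro b
    have hkey : Y - X *ᵥ b = (Y - X *ᵥ βstar) - X *ᵥ (b - βstar) := by
      rw [Matrix.mulVec_sub]; abel
    have hdot : (Y - X *ᵥ βstar) ⬝ᵥ (X *ᵥ (b - βstar)) = πstar ⬝ᵥ (b - βstar) := by
      rw [hXtw, hres]
    have hexp := dot_sub_expand (Y - X *ᵥ βstar) (X *ᵥ (b - βstar))
    have hpos : 0 ≤ (X *ᵥ (b - βstar)) ⬝ᵥ (X *ᵥ (b - βstar)) :=
      Finset.sum_nonneg fun i _ => mul_self_nonneg _
    have hsub : πstar ⬝ᵥ (b - βstar) = πstar ⬝ᵥ b - πstar ⬝ᵥ βstar :=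
      dotProduct_sub _ _ _
    rw [hkey, hexp, hdot, hsub]
    linarith
  -- bound πstar ⬝ᵥ βstar from above
  have hresnn : 0 ≤ (Y - X *ᵥ βstar) ⬝ᵥ (Y - X *ᵥ βstar) :=
    Finset.sum_nonneg fun i _ => mul_self_nonneg _
  have hYY : Y ⬝ᵥ Y = ∑ i, (Y i) ^ 2 := by simp [dotProduct, sq]
  have hb0 : πstar ⬝ᵥ βstar ≤ (1 / 2) * ∑ i, (Y i) ^ 2 := by
    have := hC3 0
    simp only [Matrix.mulVec_zero, sub_zero, dotProduct_zero, add_zero] at this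
    rw [hYY] at this
    linarith
  -- bound each coordinate of βstar
  have hbound : ∀ i : Fin p, Λ0 * |βstar i| ≤ πstar ⬝ᵥ βstar := by
    intro i
    set c : ℝ := if 0 ≤ βstar i then Λ0 else -Λ0 with hcdef
    have habsc : |c| = Λ0 := by
      rw [hcdef]
      split <;> simp [abs_of_pos hlam1, abs_of_neg, hlam1, abs_of_nonneg hlam1.le]
    set πi : Fin p → ℝ := fun j => if j = i then c else 0 with hπidef
    have hmemi : πi ∈ dualBall Λ := by
      intro S
      have h1 : ∑ j ∈ S, |πi j| = if i ∈ S then Λ0 else 0 := by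
        have : ∀ j, |πi j| = if j = i then Λ0 else 0 := by
          intro j
          rw [hπidef]
          by_cases h : j = i <;> simp [h, habsc]
        simp only [this]
        exact Finset.sum_ite_eq' S i fun _ => Λ0
      rw [h1]
      by_cases hiS : i ∈ S
      · rw [if_pos hiS]
        have hcard : 0 < S.card := Finset.card_pos.mpr ⟨i, hiS⟩
        have hmem0 : (⟨0, hp⟩ : Fin p) ∈
            Finset.univ.filter (fun j : Fin p => (j : ℕ) < S.card) := by
          simp [hcard]
        exact Finset.single_le_sum (fun j _ => hΛnonneg j) hmem0
      · rw [if_neg hiS]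
        exact Finset.sum_nonneg fun j _ => hΛnonneg j
    have hdoti : πi ⬝ᵥ βstar = Λ0 * |βstar i| := by
      have h1 : πi ⬝ᵥ βstar = c * βstar i := by
        simp only [dotProduct, hπidef, ite_mul, zero_mul]
        exact Finset.sum_ite_eq' Finset.univ i (fun j => c * βstar j) |>.trans (by simp)
      rw [h1, hcdef]
      by_cases h : 0 ≤ βstar i
      · rw [if_pos h, abs_of_nonneg h]
      · rw [if_neg h, abs_of_neg (lt_of_not_ge h)]; ring
    have := hVI πi hmemi
    rw [hdoti] at this
    exact this
  -- conclude membership in M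
  have hmemM : βstar ∈ {b : Fin p → ℝ |
      ∑ i, (b i) ^ 2 ≤ (p : ℝ) * (∑ i, (Y i) ^ 2) ^ 2 / (4 * Λ0 ^ 2)} := by
    simp only [Set.mem_setOf_eq]
    set W := ∑ i, (Y i) ^ 2 with hW
    have hsq : ∀ i : Fin p, (βstar i) ^ 2 ≤ W ^ 2 / (4 * Λ0 ^ 2) := by
      intro i
      have h1 : Λ0 * |βstar i| ≤ W / 2 := by
        have := hbound i
        linarith [hb0]
      have habs : |βstar i| ≤ W / (2 * Λ0) := by
        rw [le_div_iff₀ (by positivity)]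
        nlinarith [abs_nonneg (βstar i)]
      calc (βstar i) ^ 2 = |βstar i| ^ 2 := (sq_abs _).symm
        _ ≤ (W / (2 * Λ0)) ^ 2 := by
            apply pow_le_pow_left₀ (abs_nonneg _) habs
        _ = W ^ 2 / (4 * Λ0 ^ 2) := by
            rw [div_pow]
            congr 1
            ring
    calc ∑ i, (βstar i) ^ 2 ≤ ∑ _i : Fin p, W ^ 2 / (4 * Λ0 ^ 2) :=
          Finset.sum_le_sum fun i _ => hsq i
      _ = (p : ℝ) * (W ^ 2 / (4 * Λ0 ^ 2)) := by
          simp [Finset.sum_const, Finset.card_univ, nsmul_eq_mul]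
      _ = (p : ℝ) * W ^ 2 / (4 * Λ0 ^ 2) := by ring
  refine ⟨hmemM, ?_, ?_⟩
  · intro π hπ
    simp only []
    rw [hsum π βstar, hsum πstar βstar]
    have := hVI π hπ
    linarith
  · intro b _
    simp only []
    rw [hsum πstar βstar, hsum πstar b]
    exact hC3 b
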